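/- Let 0 < q < 1, t > 0, n ∈ ℕ, and let u be a nonzero complex number. Then the Stieltjes–Wigert polynomial at the scaled point x_n(t,u) = q^{−nt}u satisfies |S_n(q^{−nt}u; q)| ≤ |u|^n · A_q(−q^{n(t−2)}/|u|) / ((q;q)_∞ · q^{n²(t−1)}). -/

import Mathlib

/-- The finite q-Pochhammer symbol `(a;q)_n = ∏_{j=0}^{n-1} (1 - a q^j)` in `ℂ`,
with real base `q`. -/
noncomputable def qPochC (q : ℝ) (a : ℂ) (n : ℕ) : ℂ :=
  ∏ j ∈ Finset.range n, (1 - a * (q : ℂ) ^ j)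

/-- The finite q-Pochhammer symbol `(a;q)_n = ∏_{j=0}^{n-1} (1 - a q^j)` in `ℝ`. -/
noncomputable def qPochR (q a : ℝ) (n : ℕ) : ℝ :=
  ∏ j ∈ Finset.range n, (1 - a * q ^ j)

/-- The infinite q-Pochhammer symbol `(a;q)_∞ = ∏_{j=0}^{∞} (1 - a q^j)` in `ℝ`. -/
noncomputable def qPochInfR (q a : ℝ) : ℝ :=
  ∏' j : ℕ, (1 - a * q ^ j)

open Finset Real Filter Topology

set_option maxHeartbeats 1000000

section aux
variable {q : ℝ}

lemma one_sub_aux (hq0 : 0 < q) (hq1 : q < 1) (j : ℕ) :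
    0 < 1 - q * q ^ j ∧ 1 - q * q ^ j ≤ 1 ∧ 1 - q ≤ 1 - q * q ^ j := by
  have h1 : q ^ j ≤ 1 := pow_le_one₀ hq0.le hq1.le
  have h2 : 0 < q ^ j := pow_pos hq0 j
  refine ⟨by nlinarith, by nlinarith, by nlinarith⟩

lemma qPochR_pos (hq0 : 0 < q) (hq1 : q < 1) (m : ℕ) : 0 < qPochR q q m :=
  Finset.prod_pos fun j _ => (one_sub_aux hq0 hq1 j).1

lemma qPochR_succ (m : ℕ) : qPochR q q (m + 1) = qPochR q q m * (1 - q * q ^ m) :=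
  Finset.prod_range_succ _ m

lemma qPochC_eq (m : ℕ) : qPochC q q m = ((qPochR q q m : ℝ) : ℂ) := by
  unfold qPochC qPochR
  push_cast
  rfl

lemma summable_log_aux (hq0 : 0 < q) (hq1 : q < 1) :
    Summable fun j : ℕ => Real.log (1 - q * q ^ j) := by
  rw [← summable_neg_iff]
  refine Summable.of_nonneg_of_le (fun j => ?_) (fun j => ?_)
    ((summable_geometric_of_lt_one hq0.le hq1).mul_left (q / (1 - q)))
  · have h := one_sub_aux hq0 hq1 j
    simpa using Real.log_nonpos (by linarith [h.1]) h.2.1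
  · have h := one_sub_aux hq0 hq1 j
    rw [← Real.log_inv]
    have hle := Real.log_le_sub_one_of_pos (inv_pos.2 h.1)
    have heq : (1 - q * q ^ j)⁻¹ - 1 = (q * q ^ j) / (1 - q * q ^ j) := by
      have hne : (1 - q * q ^ j) ≠ 0 := ne_of_gt h.1
      field_simp
      ring
    have hb : (q * q ^ j) / (1 - q * q ^ j) ≤ (q * q ^ j) / (1 - q) := by
      have hnum : (0:ℝ) ≤ q * q ^ j := by positivity
      have hden : (0:ℝ) < 1 - q := by linarith
      exact div_le_div_of_nonneg_left hnum hden h.2.2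
    calc Real.log (1 - q * q ^ j)⁻¹ ≤ (1 - q * q ^ j)⁻¹ - 1 := hle
      _ = (q * q ^ j) / (1 - q * q ^ j) := heq
      _ ≤ (q * q ^ j) / (1 - q) := hb
      _ = (q / (1 - q)) * q ^ j := by ring

lemma qPochInf_pos (hq0 : 0 < q) (hq1 : q < 1) : 0 < qPochInfR q q := by
  have hfpos : ∀ j : ℕ, 0 < 1 - q * q ^ j := fun j => (one_sub_aux hq0 hq1 j).1
  have hsum := summable_log_aux hq0 hq1
  have hprod : HasProd (fun j : ℕ => 1 - q * q ^ j)
      (Real.exp (∑' j : ℕ, Real.log (1 - q * q ^ j))) := by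
    have h := hsum.hasSum.rexp
    have he : (Real.exp ∘ fun j : ℕ => Real.log (1 - q * q ^ j)) =
        fun j : ℕ => 1 - q * q ^ j := funext fun j => Real.exp_log (hfpos j)
    rwa [he] at h
  rw [show qPochInfR q q = _ from hprod.tprod_eq]
  exact Real.exp_pos _

lemma qPochInf_le (hq0 : 0 < q) (hq1 : q < 1) (m : ℕ) :
    qPochInfR q q ≤ qPochR q q m := by
  have hfpos : ∀ j : ℕ, 0 < 1 - q * q ^ j := fun j => (one_sub_aux hq0 hq1 j).1
  have hsum := summable_log_aux hq0 hq1
  have hsumt : Summable fun n : ℕ => Real.log (1 - q * q ^ (n + m)) :=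
    (summable_nat_add_iff m).2 hsum
  have hprodt : HasProd (fun n : ℕ => 1 - q * q ^ (n + m))
      (Real.exp (∑' n : ℕ, Real.log (1 - q * q ^ (n + m)))) := by
    have h := hsumt.hasSum.rexp
    have he : (Real.exp ∘ fun n : ℕ => Real.log (1 - q * q ^ (n + m))) =
        fun n : ℕ => 1 - q * q ^ (n + m) := funext fun n => Real.exp_log (hfpos _)
    rwa [he] at h
  have hkey := Multipliable.prod_mul_tprod_nat_mul' (f := fun j : ℕ => 1 - q * q ^ j) (k := m)
    hprodt.multipliable
  have htail : (∏' n : ℕ, (1 - q * q ^ (n + m))) ≤ 1 := by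
    rw [hprodt.tprod_eq, Real.exp_le_one_iff]
    refine tsum_nonpos fun n => Real.log_nonpos ?_ ?_
    · linarith [(one_sub_aux hq0 hq1 (n + m)).1]
    · exact (one_sub_aux hq0 hq1 (n + m)).2.1
  have htailpos : (0:ℝ) < ∏' n : ℕ, (1 - q * q ^ (n + m)) := by
    rw [hprodt.tprod_eq]; exact Real.exp_pos _
  have hPm : 0 < qPochR q q m := qPochR_pos hq0 hq1 m
  calc qPochInfR q q = qPochR q q m * ∏' n : ℕ, (1 - q * q ^ (n + m)) := by
        rw [qPochInfR, ← hkey]; rfl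
    _ ≤ qPochR q q m * 1 := mul_le_mul_of_nonneg_left htail hPm.le
    _ = qPochR q q m := mul_one _

end aux

section aux2
variable {q : ℝ}

lemma summable_g (hq0 : 0 < q) (hq1 : q < 1) {r : ℝ} (hr : 0 ≤ r) :
    Summable fun k : ℕ => q ^ (k ^ 2) * r ^ k / qPochR q q k := by
  set g : ℕ → ℝ := fun k => q ^ (k ^ 2) * r ^ k / qPochR q q k with hg
  have hP := qPochR_pos hq0 hq1
  apply summable_of_ratio_norm_eventually_le (r := 1/2) (by norm_num)
  have hbase : Tendsto (fun k : ℕ => (q ^ 2) ^ k) atTop (𝓝 0) :=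
    tendsto_pow_atTop_nhds_zero_of_lt_one (by positivity) (by nlinarith)
  have h2 : Tendsto (fun k : ℕ => q ^ (2 * k + 1) * r) atTop (𝓝 0) := by
    have he : (fun k : ℕ => q ^ (2 * k + 1) * r) = fun k : ℕ => (q ^ 2) ^ k * (q * r) := by
      funext k; rw [← pow_mul, pow_succ']; ring
    rw [he]
    simpa using hbase.mul_const (q * r)
  have hev : ∀ᶠ k in atTop, q ^ (2 * k + 1) * r < (1 - q) / 2 :=
    h2.eventually (gt_mem_nhds (show (0:ℝ) < (1 - q) / 2 by linarith))
  filter_upwards [hev] with k hk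
  have hk1 : 0 < 1 - q * q ^ k := (one_sub_aux hq0 hq1 k).1
  have hgk1 : g (k + 1) = g k * (q ^ (2 * k + 1) * r / (1 - q * q ^ k)) := by
    have hp : q ^ ((k + 1) ^ 2) = q ^ (k ^ 2) * q ^ (2 * k + 1) := by
      rw [← pow_add]; congr 1; ring
    simp only [hg]
    rw [hp, pow_succ r k, qPochR_succ]
    field_simp
  have hgpos : 0 ≤ g k := by
    have := (hP k).le
    simp only [hg]
    positivity
  have hfrac : q ^ (2 * k + 1) * r / (1 - q * q ^ k) ≤ 1 / 2 := by
    rw [div_le_iff₀ hk1]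
    have hqk : q ^ k ≤ 1 := pow_le_one₀ hq0.le hq1.le
    nlinarith [pow_pos hq0 k]
  have hfracpos : 0 ≤ q ^ (2 * k + 1) * r / (1 - q * q ^ k) := by positivity
  rw [Real.norm_eq_abs, Real.norm_eq_abs, hgk1, abs_of_nonneg hgpos,
    abs_of_nonneg (mul_nonneg hgpos hfracpos)]
  calc g k * (q ^ (2 * k + 1) * r / (1 - q * q ^ k)) ≤ g k * (1 / 2) :=
        mul_le_mul_of_nonneg_left hfrac hgpos
    _ = 1 / 2 * g k := by ring

lemma term_eq {t U : ℝ} (hq0 : 0 < q) (hU : 0 < U) {n j : ℕ} (hj : j ≤ n) :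
    q ^ ((n - j) ^ 2) * (q ^ (-(n : ℝ) * t) * U) ^ (n - j) =
      U ^ n * (q ^ ((n : ℝ) ^ 2 * (t - 1)))⁻¹ *
        (q ^ (j ^ 2) * (q ^ ((n : ℝ) * (t - 2)) / U) ^ j) := by
  have key : ∀ x : ℝ, 0 < x → ∀ m : ℕ, x ^ m = Real.exp (Real.log x * m) := by
    intro x hx m
    rw [← Real.rpow_natCast x m, Real.rpow_def_of_pos hx]
  have hm : ((n - j : ℕ) : ℝ) = (n : ℝ) - j := by
    push_cast [Nat.cast_sub hj]; ring
  rw [mul_pow, div_pow, key q hq0 ((n - j) ^ 2), key q hq0 (j ^ 2),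
    key _ (Real.rpow_pos_of_pos hq0 (-(n : ℝ) * t)) (n - j),
    key _ (Real.rpow_pos_of_pos hq0 ((n : ℝ) * (t - 2))) j,
    key U hU (n - j), key U hU n, key U hU j,
    Real.log_rpow hq0, Real.log_rpow hq0,
    Real.rpow_def_of_pos hq0 ((n : ℝ) ^ 2 * (t - 1)), ← Real.exp_neg]
  simp only [← Real.exp_sub, ← Real.exp_add, Real.exp_eq_exp]
  push_cast [hm]
  ring

end aux2

/-- The Stieltjes–Wigert polynomial
`S_n(x;q) = Σ_{k=0}^n q^{k²} (−x)^k / ((q;q)_k (q;q)_{n−k})` in `ℂ`. -/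
noncomputable def stieltjesWigertC (q : ℝ) (n : ℕ) (x : ℂ) : ℂ :=
  ∑ k ∈ Finset.range (n + 1),
    (q : ℂ) ^ (k ^ 2) * (-x) ^ k / (qPochC q q k * qPochC q q (n - k))

/-- The Ramanujan function restricted to real arguments:
`A_q(x) = Σ_{k=0}^∞ q^{k²} (−x)^k / (q;q)_k`. -/
noncomputable def ramanujanAqR (q x : ℝ) : ℝ :=
  ∑' k : ℕ, q ^ (k ^ 2) * (-x) ^ k / qPochR q q k

/-- For `0 < q < 1`, `t > 0`, `n ∈ ℕ` and nonzero complex `u`,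
`|S_n(q^{−nt}u; q)| ≤ |u|^n A_q(−q^{n(t−2)}/|u|) / ((q;q)_∞ q^{n²(t−1)})`. -/
theorem abs_stieltjesWigert_scaled_le (q t : ℝ) (hq0 : 0 < q) (hq1 : q < 1) (ht : 0 < t)
    (n : ℕ) (u : ℂ) (hu : u ≠ 0) :
    ‖stieltjesWigertC q n (((q ^ (-(n : ℝ) * t) : ℝ) : ℂ) * u)‖ ≤
      ‖u‖ ^ n * ramanujanAqR q (-(q ^ ((n : ℝ) * (t - 2)) / ‖u‖)) /
        (qPochInfR q q * q ^ ((n : ℝ) ^ 2 * (t - 1))) := by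
  set U : ℝ := ‖u‖ with hUdef
  have hU : 0 < U := norm_pos_iff.mpr hu
  set r : ℝ := q ^ ((n : ℝ) * (t - 2)) / U with hrdef
  have hrpos : 0 < r := div_pos (Real.rpow_pos_of_pos hq0 _) hU
  have hP := qPochR_pos hq0 hq1
  set L : ℝ := qPochInfR q q with hLdef
  have hL : 0 < L := qPochInf_pos hq0 hq1
  set Q : ℝ := q ^ ((n : ℝ) ^ 2 * (t - 1)) with hQdef
  have hQ : 0 < Q := Real.rpow_pos_of_pos hq0 _
  set g : ℕ → ℝ := fun k => q ^ (k ^ 2) * r ^ k / qPochR q q k with hgdef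
  have hgpos : ∀ k, 0 ≤ g k := fun k =>
    div_nonneg (mul_nonneg (pow_nonneg hq0.le _) (pow_nonneg hrpos.le _)) (hP _).le
  have hgsum : Summable g := summable_g hq0 hq1 hrpos.le
  have hT : ramanujanAqR q (-r) = ∑' k, g k := by
    simp only [ramanujanAqR, neg_neg, hgdef]
  set F : ℕ → ℝ := fun k =>
    q ^ (k ^ 2) * (q ^ (-(n : ℝ) * t) * U) ^ k / (qPochR q q k * qPochR q q (n - k))
    with hFdef
  have habs : ∀ k : ℕ, ‖(q : ℂ) ^ (k ^ 2) *
      (-(((q ^ (-(n : ℝ) * t) : ℝ) : ℂ) * u)) ^ k /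
      (qPochC q (q : ℂ) k * qPochC q (q : ℂ) (n - k))‖ = F k := by
    intro k
    rw [qPochC_eq, qPochC_eq]
    simp only [norm_div, norm_mul, norm_pow, norm_neg, Complex.norm_real, Real.norm_eq_abs, hFdef]
    rw [abs_of_pos hq0, abs_of_pos (Real.rpow_pos_of_pos hq0 _),
      abs_of_pos (hP k), abs_of_pos (hP (n - k)), ← hUdef]
  have step1 : ‖stieltjesWigertC q n (((q ^ (-(n : ℝ) * t) : ℝ) : ℂ) * u)‖ ≤
      ∑ k ∈ Finset.range (n + 1), F k := by
    rw [stieltjesWigertC]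
    refine (norm_sum_le _ _).trans_eq ?_
    exact Finset.sum_congr rfl fun k _ => habs k
  have step2 : ∑ k ∈ Finset.range (n + 1), F k = ∑ j ∈ Finset.range (n + 1), F (n - j) := by
    have h := Finset.sum_range_reflect F (n + 1)
    simp only [Nat.add_sub_cancel] at h
    exact h.symm
  have step3 : ∀ j ∈ Finset.range (n + 1), F (n - j) ≤ U ^ n / (L * Q) * g j := by
    intro j hj
    have hjn : j ≤ n := Nat.lt_succ_iff.mp (Finset.mem_range.mp hj)
    have hsub : n - (n - j) = j := Nat.sub_sub_self hjn
    have hLle : L ≤ qPochR q q (n - j) := qPochInf_le hq0 hq1 (n - j)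
    simp only [hFdef, hgdef, hsub]
    rw [term_eq hq0 hU hjn, ← hrdef, ← hQdef]
    have hrw : U ^ n / (L * Q) * (q ^ (j ^ 2) * r ^ j / qPochR q q j) =
        U ^ n * Q⁻¹ * (q ^ (j ^ 2) * r ^ j) / (L * qPochR q q j) := by
      field_simp
    rw [hrw]
    refine div_le_div_of_nonneg_left ?_ (mul_pos hL (hP j)) ?_
    · have : (0:ℝ) ≤ q ^ (j ^ 2) * r ^ j :=
        mul_nonneg (pow_nonneg hq0.le _) (pow_nonneg hrpos.le _)
      exact mul_nonneg (mul_nonneg (pow_nonneg hU.le _) (inv_nonneg.2 hQ.le)) this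
    · exact mul_le_mul_of_nonneg_right hLle (hP j).le
  calc ‖stieltjesWigertC q n (((q ^ (-(n : ℝ) * t) : ℝ) : ℂ) * u)‖ ≤
        ∑ k ∈ Finset.range (n + 1), F k := step1
    _ = ∑ j ∈ Finset.range (n + 1), F (n - j) := step2
    _ ≤ ∑ j ∈ Finset.range (n + 1), U ^ n / (L * Q) * g j := Finset.sum_le_sum step3
    _ = U ^ n / (L * Q) * ∑ j ∈ Finset.range (n + 1), g j := by rw [← Finset.mul_sum]
    _ ≤ U ^ n / (L * Q) * ∑' k, g k := by
        refine mul_le_mul_of_nonneg_left ?_ ?_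
        · exact Summable.sum_le_tsum _ (fun i _ => hgpos i) hgsum
        · exact (div_pos (pow_pos hU n) (mul_pos hL hQ)).le
    _ = U ^ n * ramanujanAqR q (-r) / (L * Q) := by rw [hT]; ring
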